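/- For every integer k ≥ 1, and all integers m, n with n ≥ |m| + k + 1 and |m| ≥ n/2 - 2k + 2, one has N_k(m,n) = p(n - |m| - k + 1) - p(n - |m| - k). -/

import Mathlib

/-- `partitionCount n` is the number of partitions of `n`. -/
def partitionCount (n : ℕ) : ℕ := Fintype.card (Nat.Partition n)

/-- The partition function extended to the integers by `0` on negative arguments. -/
def pInt (x : ℤ) : ℤ := if 0 ≤ x then (partitionCount x.toNat : ℤ) else 0

/-- Garvan's `k`-rank counting function `N_k(m,n)`, obtained by expanding the generating
function `(q;q)_∞⁻¹ ∑_{ℓ≥1} (-1)^{ℓ-1} q^{ℓ((2k-1)ℓ-1)/2+|m|ℓ}(1-q^ℓ)`: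
`N_k(m,n) = ∑_{ℓ≥1} (-1)^{ℓ-1} (p(n - ((2k-1)ℓ²-ℓ)/2 - |m|ℓ) - p(n - ((2k-1)ℓ²-ℓ)/2 - (|m|+1)ℓ))`,
the sum being finite since `p` vanishes on negative arguments. -/
def Nk (k : ℕ) (m n : ℤ) : ℤ :=
  ∑ ℓ ∈ Finset.Icc 1 (n.toNat + 1),
    (-1 : ℤ) ^ (ℓ - 1) *
      (pInt (n - ((2 * (k : ℤ) - 1) * (ℓ : ℤ) ^ 2 - ℓ) / 2 - |m| * ℓ) -
        pInt (n - ((2 * (k : ℤ) - 1) * (ℓ : ℤ) ^ 2 - ℓ) / 2 - (|m| + 1) * ℓ))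

lemma pInt_neg {x : ℤ} (hx : x < 0) : pInt x = 0 := by
  simp [pInt, not_le.mpr hx]

theorem stmt9 (k : ℕ) (hk : 1 ≤ k) (m n : ℤ)
    (h1 : |m| + k + 1 ≤ n) (h2 : (n : ℝ) / 2 - 2 * k + 2 ≤ |m|) :
    Nk k m n = pInt (n - |m| - k + 1) - pInt (n - |m| - k) := by
  have habs : (0:ℤ) ≤ |m| := abs_nonneg m
  have h2' : n ≤ 2 * |m| + 4 * k - 4 := by
    have hr : (n : ℝ) ≤ ((2 * |m| + 4 * k - 4 : ℤ) : ℝ) := by push_cast at h2 ⊢; linarith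
    exact_mod_cast hr
  have hk' : (1:ℤ) ≤ (k:ℤ) := by exact_mod_cast hk
  rw [Nk, Finset.sum_eq_single_of_mem 1]
  · have e1 : (n - ((2 * (k:ℤ) - 1) * ((1:ℕ):ℤ) ^ 2 - ((1:ℕ):ℤ)) / 2 - |m| * ((1:ℕ):ℤ))
        = n - |m| - k + 1 := by
      set a := |m|; push_cast; omega
    have e2 : (n - ((2 * (k:ℤ) - 1) * ((1:ℕ):ℤ) ^ 2 - ((1:ℕ):ℤ)) / 2 - (|m| + 1) * ((1:ℕ):ℤ))
        = n - |m| - k := by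
      set a := |m|; push_cast; omega
    rw [e1, e2]; ring
  · simp
  · intro ℓ hℓ hne
    simp only [Finset.mem_Icc] at hℓ
    have hℓ2 : 2 ≤ ℓ := by omega
    have hL : (2:ℤ) ≤ (ℓ:ℤ) := by exact_mod_cast hℓ2
    set L : ℤ := (ℓ:ℤ) with hLdef
    obtain ⟨c, hc⟩ : Even (L * (L + 1)) := Int.even_mul_succ_self L
    have hdiv : ((2 * (k:ℤ) - 1) * L ^ 2 - L) / 2 = (k:ℤ) * L ^ 2 - c := by
      have h : (2 * (k:ℤ) - 1) * L ^ 2 - L = 2 * ((k:ℤ) * L ^ 2 - c) := by nlinarith [hc]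
      rw [h]
      exact Int.mul_ediv_cancel_left _ (by norm_num)
    have key : n - ((k:ℤ) * L ^ 2 - c) - |m| * L < 0 := by
      nlinarith [mul_nonneg habs (by linarith : (0:ℤ) ≤ L - 2),
        mul_nonneg (by linarith : (0:ℤ) ≤ L - 2)
          (by nlinarith : (0:ℤ) ≤ (2 * (k:ℤ) - 1) * (L + 2) - 1)]
    have key2 : n - ((k:ℤ) * L ^ 2 - c) - (|m| + 1) * L < 0 := by nlinarith
    rw [hdiv, pInt_neg key, pInt_neg key2]
    ring
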